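/- Let C ⊂ ℝ³ be a C² injective compact curve. Then there exists ε > 0 such that: (i) every x ∈ ℝ³ with infDist x C < ε has a unique nearest point y ∈ C (i.e. a unique y ∈ C with dist x y = infDist x C); and (ii) the nearest-point assignment is continuous: for every such x with nearest point y and every δ > 0 there exists ρ > 0 such that whenever x' ∈ ℝ³ satisfies dist x' x < ρ and y' ∈ C satisfies dist x' y' = infDist x' C, one has dist y' y < δ. -/

import Mathlib

open MeasureTheory Metric Set Filter
open scoped RealInnerProductSpace ContDiff SchwartzMap

noncomputable section

abbrev E3 := EuclideanSpace ℝ (Fin 3)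

set_option maxHeartbeats 2000000 in
/-- Unique nearest point on a C² injective compact curve near the curve, and
continuity of the nearest-point assignment. -/
theorem unique_nearest_point_continuous_of_C2_curve
    (γ : ℝ → E3) (L : ℝ) (hL : 0 < L)
    (hγ : ContDiff ℝ 2 γ) (hγinj : Set.InjOn γ (Set.Icc 0 L))
    (harc : ∀ s ∈ Set.Icc (0:ℝ) L, ‖deriv γ s‖ = 1)
    (C : Set E3) (hC : C = γ '' Set.Icc 0 L) :
    ∃ ε > 0,
      (∀ x : E3, Metric.infDist x C < ε →
        ∃! y, y ∈ C ∧ dist x y = Metric.infDist x C) ∧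
      (∀ x : E3, Metric.infDist x C < ε →
        ∀ y ∈ C, dist x y = Metric.infDist x C →
          ∀ δ > 0, ∃ ρ > 0, ∀ x' : E3, dist x' x < ρ →
            ∀ y' ∈ C, dist x' y' = Metric.infDist x' C → dist y' y < δ) := by
  -- Basic smoothness facts
  have h2 : ContDiff ℝ ((1:ℕ)+1) γ := by exact_mod_cast hγ
  have hdγ : ContDiff ℝ 1 (deriv γ) := (contDiff_succ_iff_deriv.mp h2).2.2
  have hγdiff : Differentiable ℝ γ := (contDiff_succ_iff_deriv.mp h2).1
  have h1 : ContDiff ℝ ((0:ℕ)+1) (deriv γ) := by exact_mod_cast hdγ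
  have hgdiff : Differentiable ℝ (deriv γ) := (contDiff_succ_iff_deriv.mp h1).1
  have hγ'' : Continuous (deriv (deriv γ)) := (contDiff_succ_iff_deriv.mp h1).2.2.continuous
  have hCcpt : IsCompact C := by
    rw [hC]; exact isCompact_Icc.image hγ.continuous
  have hCne : C.Nonempty := by
    rw [hC]; exact ⟨γ 0, mem_image_of_mem _ ⟨le_refl 0, hL.le⟩⟩
  -- bound on second derivative
  obtain ⟨K0, hK0⟩ := isCompact_Icc.exists_bound_of_continuousOn
    (f := deriv (deriv γ)) (s := Set.Icc (0:ℝ) L) hγ''.continuousOn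
  set K : ℝ := max K0 0 with hKdef
  have hK : ∀ u ∈ Set.Icc (0:ℝ) L, ‖deriv (deriv γ) u‖ ≤ K :=
    fun u hu => (hK0 u hu).trans (le_max_left _ _)
  have hKnn : 0 ≤ K := le_max_right _ _
  -- Lipschitz bound
  have hlip : ∀ s ∈ Set.Icc (0:ℝ) L, ∀ t ∈ Set.Icc (0:ℝ) L, ‖γ s - γ t‖ ≤ |s - t| := by
    intro s hs t ht
    have := Convex.norm_image_sub_le_of_norm_hasDerivWithin_le
      (f := γ) (f' := deriv γ) (s := Set.Icc (0:ℝ) L) (C := 1)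
      (fun u _ => (hγdiff u).hasDerivAt.hasDerivWithinAt)
      (fun u hu => le_of_eq (harc u hu)) (convex_Icc 0 L) ht hs
    simpa [Real.norm_eq_abs] using this
  -- the separation constant
  set δ0 : ℝ := min L (1/(4*(K+1))) with hδ0def
  have hδ0pos : 0 < δ0 := lt_min hL (by positivity)
  have hδ0L : δ0 ≤ L := min_le_left _ _
  have hδ0K : δ0 ≤ 1/(4*(K+1)) := min_le_right _ _
  -- minimum of ‖γ s - γ t‖ on the far-apart set
  set S : Set (ℝ × ℝ) := {p | p.1 ∈ Set.Icc (0:ℝ) L ∧ p.2 ∈ Set.Icc (0:ℝ) L ∧ δ0 ≤ |p.1 - p.2|}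
    with hSdef
  have hScpt : IsCompact S := by
    have hclosed : IsClosed S := by
      apply IsClosed.inter (isClosed_Icc.preimage continuous_fst)
      apply IsClosed.inter (isClosed_Icc.preimage continuous_snd)
      exact isClosed_le continuous_const ((continuous_fst.sub continuous_snd).abs)
    exact (isCompact_Icc.prod isCompact_Icc).of_isClosed_subset hclosed
      (fun p hp => ⟨hp.1, hp.2.1⟩)
  have hSne : S.Nonempty := by
    refine ⟨(0, δ0), ⟨le_refl 0, hL.le⟩, ⟨hδ0pos.le, hδ0L⟩, ?_⟩
    rw [zero_sub, abs_neg, abs_of_nonneg hδ0pos.le]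
  obtain ⟨p0, hp0S, hp0min⟩ := hScpt.exists_isMinOn hSne
    (f := fun p => ‖γ p.1 - γ p.2‖)
    (Continuous.continuousOn
      (((hγ.continuous.comp continuous_fst).sub (hγ.continuous.comp continuous_snd)).norm))
  set c : ℝ := ‖γ p0.1 - γ p0.2‖ with hcdef
  have hcpos : 0 < c := by
    rw [hcdef, norm_pos_iff, sub_ne_zero]
    intro he
    have := hγinj hp0S.1 hp0S.2.1 he
    have h2 := hp0S.2.2
    rw [this, sub_self, abs_zero] at h2
    exact absurd h2 (not_le.mpr hδ0pos)
  have hcmin : ∀ s ∈ Set.Icc (0:ℝ) L, ∀ t ∈ Set.Icc (0:ℝ) L, δ0 ≤ |s - t| →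
      c ≤ ‖γ s - γ t‖ := by
    intro s hs t ht hst
    exact isMinOn_iff.mp hp0min (s, t) ⟨hs, ht, hst⟩
  -- choose ε
  refine ⟨min (c/3) (1/(4*(K+1))), lt_min (by positivity) (by positivity), ?_⟩
  set ε : ℝ := min (c/3) (1/(4*(K+1))) with hεdef
  have hεc : ε ≤ c/3 := min_le_left _ _
  have hεK : ε ≤ 1/(4*(K+1)) := min_le_right _ _
  -- derivative computations for f u = ‖x - γ u‖²
  have hfd : ∀ (x : E3) (u : ℝ), HasDerivAt (fun u => ‖x - γ u‖^2)
      (-2 * ⟪x - γ u, deriv γ u⟫) u := by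
    intro x u
    have h1 : HasDerivAt (fun u => x - γ u) (-(deriv γ u)) u := (hγdiff u).hasDerivAt.const_sub x
    have h2 := h1.inner ℝ h1
    have heq : (fun u => ‖x - γ u‖^2) = fun u => ⟪x - γ u, x - γ u⟫ := by
      funext v; rw [real_inner_self_eq_norm_sq]
    rw [heq]
    refine h2.congr_deriv ?_
    rw [inner_neg_right, inner_neg_left, real_inner_comm]
    ring
  have hfd2 : ∀ (x : E3) (u : ℝ), HasDerivAt (fun u => -2 * ⟪x - γ u, deriv γ u⟫)
      (2 * ‖deriv γ u‖^2 - 2 * ⟪x - γ u, deriv (deriv γ) u⟫) u := by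
    intro x u
    have h1 : HasDerivAt (fun u => x - γ u) (-(deriv γ u)) u := (hγdiff u).hasDerivAt.const_sub x
    have h2 := (h1.inner ℝ (hgdiff u).hasDerivAt).const_mul (-2 : ℝ)
    refine h2.congr_deriv ?_
    rw [inner_neg_left, real_inner_self_eq_norm_sq]
    ring
  have hderiv2 : ∀ (x : E3), deriv^[2] (fun u => ‖x - γ u‖^2) =
      fun u => 2 * ‖deriv γ u‖^2 - 2 * ⟪x - γ u, deriv (deriv γ) u⟫ := by
    intro x
    have h1 : deriv (fun u => ‖x - γ u‖^2) = fun u => -2 * ⟪x - γ u, deriv γ u⟫ := by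
      funext u; exact (hfd x u).deriv
    funext u
    simp only [Function.iterate_succ, Function.iterate_zero, Function.comp_apply, id_eq]
    rw [h1]
    exact (hfd2 x u).deriv
  -- Key uniqueness lemma
  have key : ∀ x : E3, Metric.infDist x C < ε → ∀ y ∈ C, dist x y = Metric.infDist x C →
      ∀ z ∈ C, dist x z = Metric.infDist x C → y = z := by
    intro x hx y hy hyd z hz hzd
    rw [hC] at hy hz
    obtain ⟨s, hs, rfl⟩ := hy
    obtain ⟨t, ht, rfl⟩ := hz
    by_cases hst : s = t
    · rw [hst]
    set d : ℝ := Metric.infDist x C with hddef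
    have hd0 : 0 ≤ d := Metric.infDist_nonneg
    -- first: |s - t| < δ0
    have hclose : |s - t| < δ0 := by
      by_contra hfar
      push_neg at hfar
      have h1 : c ≤ ‖γ s - γ t‖ := hcmin s hs t ht hfar
      have h2 : ‖γ s - γ t‖ ≤ dist x (γ s) + dist x (γ t) := by
        rw [dist_eq_norm, dist_eq_norm]
        calc ‖γ s - γ t‖ = ‖(γ s - x) + (x - γ t)‖ := by rw [sub_add_sub_cancel]
          _ ≤ ‖γ s - x‖ + ‖x - γ t‖ := norm_add_le _ _
          _ = ‖x - γ s‖ + ‖x - γ t‖ := by rw [norm_sub_rev]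
      rw [hyd, hzd] at h2
      have : c ≤ 2 * d := by linarith
      have : c < 2 * ε := by linarith
      have : c < 2 * (c/3) := lt_of_lt_of_le this (by linarith)
      linarith [hcpos]
    -- strict convexity of f on [min s t, max s t]
    set a : ℝ := min s t
    set b : ℝ := max s t
    have hab : a < b := min_lt_max.mpr hst
    have haI : a ∈ Set.Icc (0:ℝ) L := by
      rcases min_choice s t with h | h <;> rw [show a = min s t from rfl, h]
      exacts [hs, ht]
    have hbI : b ∈ Set.Icc (0:ℝ) L := by
      rcases max_choice s t with h | h <;> rw [show b = max s t from rfl, h]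
      exacts [hs, ht]
    have hsubset : Set.Icc a b ⊆ Set.Icc (0:ℝ) L :=
      Set.Icc_subset_Icc haI.1 hbI.2
    set f : ℝ → ℝ := fun u => ‖x - γ u‖^2 with hfdef
    have hfc : StrictConvexOn ℝ (Set.Icc a b) f := by
      apply strictConvexOn_of_deriv2_pos (convex_Icc a b)
      · exact Continuous.continuousOn ((continuous_const.sub hγ.continuous).norm.pow 2)
      · intro u hu
        rw [interior_Icc] at hu
        have huI : u ∈ Set.Icc (0:ℝ) L := hsubset ⟨hu.1.le, hu.2.le⟩
        show 0 < deriv^[2] (fun u => ‖x - γ u‖^2) u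
        rw [hderiv2 x]
        have hnorm1 : ‖deriv γ u‖ = 1 := harc u huI
        -- ‖x - γ u‖ ≤ d + |a - u| ≤ ε + δ0
        have hxu : ‖x - γ u‖ ≤ ε + δ0 := by
          have h1 : ‖x - γ u‖ ≤ ‖x - γ a‖ + ‖γ a - γ u‖ := by
            calc ‖x - γ u‖ = ‖(x - γ a) + (γ a - γ u)‖ := by rw [sub_add_sub_cancel]
              _ ≤ _ := norm_add_le _ _
          have h2 : ‖γ a - γ u‖ ≤ |a - u| := hlip a haI u huI
          have h3 : |a - u| ≤ |s - t| := by
            have hba : b - a = |s - t| := by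
              rw [abs_sub_comm]; exact max_sub_min_eq_abs s t
            rw [abs_sub_comm, abs_of_nonneg (by linarith [hu.1.le] : (0:ℝ) ≤ u - a)]
            linarith [hu.2.le]
          have h4 : ‖x - γ a‖ = d ∨ ‖x - γ a‖ = d := by
            rcases min_choice s t with h | h <;> left
            · rw [show a = min s t from rfl, h, ← dist_eq_norm]; exact hyd
            · rw [show a = min s t from rfl, h, ← dist_eq_norm]; exact hzd
          have h5 : ‖x - γ a‖ = d := h4.elim id id
          have := hclose.le
          linarith
        have hinner : ⟪x - γ u, deriv (deriv γ) u⟫ ≤ (ε + δ0) * K :=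
          le_trans (real_inner_le_norm _ _)
            (mul_le_mul hxu (hK u huI) (norm_nonneg _) (by linarith))
        have hb1 : (ε + δ0) * K < 1/2 := by
          have h1 : ε + δ0 ≤ 1/(2*(K+1)) := by
            have := hεK; have := hδ0K
            have : ε + δ0 ≤ 2 * (1/(4*(K+1))) := by linarith
            calc ε + δ0 ≤ 2 * (1/(4*(K+1))) := this
              _ = 1/(2*(K+1)) := by field_simp; ring
          calc (ε + δ0) * K ≤ (1/(2*(K+1))) * K :=
                mul_le_mul_of_nonneg_right h1 hKnn
            _ < 1/2 := by
                rw [div_mul_eq_mul_div, one_mul, div_lt_div_iff₀ (by positivity) (by norm_num)]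
                linarith
        show (0:ℝ) < 2 * ‖deriv γ u‖^2 - 2 * ⟪x - γ u, deriv (deriv γ) u⟫
        rw [hnorm1]
        nlinarith [hinner, hb1]
    -- both s and t are minimizers with value d²
    have hfs : f s = d^2 := by
      rw [hfdef]; simp only; rw [← dist_eq_norm, hyd]
    have hft : f t = d^2 := by
      rw [hfdef]; simp only; rw [← dist_eq_norm, hzd]
    have hsmem : s ∈ Set.Icc a b := ⟨min_le_left s t, le_max_left s t⟩
    have htmem : t ∈ Set.Icc a b := ⟨min_le_right s t, le_max_right s t⟩
    have hmid := hfc.2 hsmem htmem hst (by norm_num : (0:ℝ) < 1/2)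
      (by norm_num : (0:ℝ) < 1/2) (by norm_num)
    rw [hfs, hft] at hmid
    have hmid2 : f ((1/2 : ℝ) • s + (1/2 : ℝ) • t) < d^2 := by
      calc f _ < (1/2) * d^2 + (1/2) * d^2 := hmid
        _ = d^2 := by ring
    -- but the midpoint is in [0, L], so f ≥ d²
    have hmmem : (1/2 : ℝ) • s + (1/2 : ℝ) • t ∈ Set.Icc (0:ℝ) L := by
      apply hsubset
      exact (convex_Icc a b) hsmem htmem (by norm_num) (by norm_num) (by norm_num)
    have hge : d ≤ dist x (γ ((1/2 : ℝ) • s + (1/2 : ℝ) • t)) := by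
      apply Metric.infDist_le_dist_of_mem
      rw [hC]; exact mem_image_of_mem _ hmmem
    have : d^2 ≤ f ((1/2 : ℝ) • s + (1/2 : ℝ) • t) := by
      rw [hfdef]; simp only; rw [← dist_eq_norm]
      exact pow_le_pow_left₀ hd0 hge 2
    linarith
  constructor
  · -- part (i)
    intro x hx
    obtain ⟨y, hy, hyd⟩ := hCcpt.exists_infDist_eq_dist hCne x
    refine ⟨y, ⟨hy, hyd.symm⟩, ?_⟩
    rintro z ⟨hz, hzd⟩
    exact (key x hx y hy hyd.symm z hz hzd).symm
  · -- part (ii)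
    intro x hx y hy hyd δ hδ
    by_contra hcon
    push_neg at hcon
    have hseq : ∀ n : ℕ, ∃ x' : E3, dist x' x < 1/(n+1) ∧ ∃ y' ∈ C,
        dist x' y' = Metric.infDist x' C ∧ δ ≤ dist y' y := by
      intro n
      obtain ⟨x', hx'1, y', hy'1, hy'2, hy'3⟩ := hcon (1/(n+1)) (by positivity)
      exact ⟨x', hx'1, y', hy'1, hy'2, hy'3⟩
    choose u hu v hv hvd hvy using hseq
    obtain ⟨ystar, hystar, φ, hφ, hφt⟩ := hCcpt.tendsto_subseq hv
    have hut : Tendsto u atTop (nhds x) := by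
      rw [tendsto_iff_dist_tendsto_zero]
      apply squeeze_zero (fun n => dist_nonneg) (fun n => (hu n).le)
      exact tendsto_one_div_add_atTop_nhds_zero_nat
    have huφt : Tendsto (u ∘ φ) atTop (nhds x) := hut.comp hφ.tendsto_atTop
    have hdt : Tendsto (fun n => dist (u (φ n)) (v (φ n))) atTop (nhds (dist x ystar)) :=
      huφt.dist hφt
    have hit : Tendsto (fun n => Metric.infDist (u (φ n)) C) atTop
        (nhds (Metric.infDist x C)) :=
      ((continuous_infDist_pt C).tendsto x).comp huφt
    have heq : (fun n => dist (u (φ n)) (v (φ n))) = fun n => Metric.infDist (u (φ n)) C := by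
      funext n; exact hvd (φ n)
    rw [heq] at hdt
    have hxy : dist x ystar = Metric.infDist x C := tendsto_nhds_unique hdt hit
    have : ystar = y := key x hx ystar hystar hxy y hy hyd
    have hlim : Tendsto (fun n => dist (v (φ n)) y) atTop (nhds (dist ystar y)) :=
      hφt.dist tendsto_const_nhds
    have hδle : δ ≤ dist ystar y :=
      ge_of_tendsto hlim (Filter.Eventually.of_forall (fun n => hvy (φ n)))
    rw [this, dist_self] at hδle
    linarith
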